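/- Let Π and Π̃ be Markov kernels on a measurable space X satisfying Doeblin minorizations Π(x,·) ≥ ε̲ ν(·) and Π̃(x,·) ≥ ε ν(·) for all x, with probability measure ν and 0 < ε̲ ≤ ε < 1, so that each is uniformly ergodic with unique invariant distributions π and π̃ satisfying ‖Π̃^n(x,·) - π̃‖_TV ≤ (1-ε)^n. If sup_x ‖Π̃(x,·) - Π(x,·)‖_TV ≤ ε - ε̲, then ‖π̃ - π‖_TV ≤ 1 - ε̲/ε. -/

import Mathlib

open MeasureTheory ProbabilityTheory Set Filter

section Aux

variable {X : Type*} [MeasurableSpace X]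

lemma aux_meas_le_measurable (μ : Measure X) (f : X → ℝ) :
    Measurable fun t : ℝ => (μ {a | t ≤ f a}).toReal :=
  Measurable.ennreal_toReal
    (Antitone.measurable fun _ _ hst => measure_mono fun _ h => hst.trans h)

lemma aux_tv_integral_diff (μ μ' : Measure X)
    [IsFiniteMeasure μ] [IsFiniteMeasure μ'] {f : X → ℝ} (hf : Measurable f)
    {c : ℝ} (hc : 0 ≤ c) (h0 : ∀ x, 0 ≤ f x) (h1 : ∀ x, f x ≤ c)
    {D : ℝ} (hD : ∀ B, MeasurableSet B → |(μ B).toReal - (μ' B).toReal| ≤ D) :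
    |∫ x, f x ∂μ - ∫ x, f x ∂μ'| ≤ c * D := by
  have hint : ∀ (m : Measure X) [IsFiniteMeasure m], Integrable f m := by
    intro m _
    exact (integrable_const c).mono' hf.aestronglyMeasurable
      (Eventually.of_forall fun x => by
        rw [Real.norm_eq_abs, abs_of_nonneg (h0 x)]; exact h1 x)
  rw [(hint μ).integral_eq_integral_Ioc_meas_le (Eventually.of_forall h0)
        (Eventually.of_forall h1),
      (hint μ').integral_eq_integral_Ioc_meas_le (Eventually.of_forall h0)
        (Eventually.of_forall h1)]
  have hiOn : ∀ (m : Measure X) [IsFiniteMeasure m],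
      IntegrableOn (fun t : ℝ => (m {a | t ≤ f a}).toReal) (Ioc 0 c) := by
    intro m _
    refine ((integrableOn_const_iff (C := (m Set.univ).toReal)).2
        (Or.inr measure_Ioc_lt_top)).mono'
      ((aux_meas_le_measurable m f).aestronglyMeasurable)
      (Eventually.of_forall fun t => ?_)
    rw [Real.norm_eq_abs, abs_of_nonneg ENNReal.toReal_nonneg]
    exact ENNReal.toReal_mono (measure_ne_top m _) (measure_mono (subset_univ _))
  simp only [Measure.real]
  rw [← integral_sub (hiOn μ) (hiOn μ')]
  have hvol : ((volume : Measure ℝ) (Ioc 0 c)).toReal = c := by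
    rw [Real.volume_Ioc, sub_zero, ENNReal.toReal_ofReal hc]
  calc |∫ t in Ioc 0 c, ((μ {a | t ≤ f a}).toReal - (μ' {a | t ≤ f a}).toReal)|
      ≤ D * ((volume : Measure ℝ) (Ioc 0 c)).toReal := by
        rw [← Real.norm_eq_abs]
        refine MeasureTheory.norm_setIntegral_le_of_norm_le_const measure_Ioc_lt_top
          fun t _ => ?_
        rw [Real.norm_eq_abs]
        exact hD _ (hf measurableSet_Ici)
    _ = c * D := by rw [hvol, mul_comm]

lemma aux_isProb_bind (Kt : Kernel X X) [IsMarkovKernel Kt] (μ : Measure X)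
    [IsProbabilityMeasure μ] : IsProbabilityMeasure (μ.bind fun x => Kt x) := by
  constructor
  rw [Measure.bind_apply MeasurableSet.univ (Kernel.measurable Kt).aemeasurable]
  simp

lemma aux_bind_toReal (Kt : Kernel X X) [IsMarkovKernel Kt] (μ : Measure X)
    [IsProbabilityMeasure μ] {A : Set X} (hA : MeasurableSet A) :
    ((μ.bind fun x => Kt x) A).toReal = ∫ x, (Kt x A).toReal ∂μ := by
  rw [Measure.bind_apply hA (Kernel.measurable Kt).aemeasurable]
  rw [integral_toReal ((Kernel.measurable_coe Kt hA).aemeasurable)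
    (Eventually.of_forall fun x => measure_lt_top _ _)]

lemma aux_toReal_compl (μ : Measure X) [IsProbabilityMeasure μ] {A : Set X}
    (hA : MeasurableSet A) : (μ A).toReal + (μ Aᶜ).toReal = 1 := by
  have h := measure_add_measure_compl (μ := μ) hA
  have := congrArg ENNReal.toReal h
  rwa [ENNReal.toReal_add (measure_ne_top _ _) (measure_ne_top _ _), measure_univ,
    ENNReal.toReal_one] at this

lemma aux_min_toReal {c : ℝ} (hc : 0 ≤ c) {m m' : Measure X} {A : Set X}
    (h : ENNReal.ofReal c * m A ≤ m' A) (hm : m A ≠ ⊤) (hm' : m' A ≠ ⊤) :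
    c * (m A).toReal ≤ (m' A).toReal := by
  have := ENNReal.toReal_mono hm' h
  rwa [ENNReal.toReal_mul, ENNReal.toReal_ofReal hc] at this

/-- Doeblin contraction step in total variation. -/
lemma aux_contraction (Kt : Kernel X X) [IsMarkovKernel Kt] (ν : Measure X)
    [IsProbabilityMeasure ν] {ε : ℝ} (hε0 : 0 < ε) (hε1 : ε ≤ 1)
    (hmin : ∀ x A, MeasurableSet A → ENNReal.ofReal ε * ν A ≤ Kt x A)
    (μ μ' : Measure X) [IsProbabilityMeasure μ] [IsProbabilityMeasure μ']
    {D : ℝ} (hD : ∀ B, MeasurableSet B → |(μ B).toReal - (μ' B).toReal| ≤ D)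
    {A : Set X} (hA : MeasurableSet A) :
    |((μ.bind fun x => Kt x) A).toReal - ((μ'.bind fun x => Kt x) A).toReal|
      ≤ (1 - ε) * D := by
  set f : X → ℝ := fun x => (Kt x A).toReal - ε * (ν A).toReal with hfdef
  have hfmeas : Measurable f :=
    (Measurable.ennreal_toReal (Kernel.measurable_coe Kt hA)).sub measurable_const
  have hf0 : ∀ x, 0 ≤ f x := by
    intro x
    have := aux_min_toReal hε0.le (hmin x A hA) (measure_ne_top _ _) (measure_ne_top _ _)
    simp only [hfdef]; linarith
  have hf1 : ∀ x, f x ≤ 1 - ε := by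
    intro x
    have hc := aux_min_toReal hε0.le (hmin x Aᶜ hA.compl) (measure_ne_top _ _)
      (measure_ne_top _ _)
    have h1 := aux_toReal_compl (Kt x) hA
    have h2 := aux_toReal_compl ν hA
    simp only [hfdef]
    nlinarith
  have hbdd : ∀ x, ‖f x‖ ≤ 1 - ε := fun x => by
    rw [Real.norm_eq_abs, abs_of_nonneg (hf0 x)]; exact hf1 x
  have hintf : ∀ (m : Measure X) [IsProbabilityMeasure m], Integrable f m := by
    intro m _
    exact (integrable_const (1 - ε)).mono' hfmeas.aestronglyMeasurable
      (Eventually.of_forall hbdd)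
  have key : ∀ (m : Measure X) [IsProbabilityMeasure m],
      ((m.bind fun x => Kt x) A).toReal = (∫ x, f x ∂m) + ε * (ν A).toReal := by
    intro m _
    rw [aux_bind_toReal Kt m hA]
    have : ∀ x, (Kt x A).toReal = f x + ε * (ν A).toReal := fun x => by
      simp [hfdef]
    rw [integral_congr_ae (Eventually.of_forall this),
      integral_add (hintf m) (integrable_const _), integral_const]
    simp
  rw [key μ, key μ']
  have : (∫ x, f x ∂μ) + ε * (ν A).toReal - ((∫ x, f x ∂μ') + ε * (ν A).toReal)
      = (∫ x, f x ∂μ) - ∫ x, f x ∂μ' := by ring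
  rw [this]
  exact aux_tv_integral_diff μ μ' hfmeas (by linarith) hf0 hf1 hD

lemma aux_toReal_le_one (μ : Measure X) [IsProbabilityMeasure μ] (s : Set X) :
    (μ s).toReal ≤ 1 := by
  rw [← ENNReal.toReal_one]
  exact ENNReal.toReal_mono ENNReal.one_ne_top prob_le_one

/-- The iterated bind `π Kt^n`. -/
noncomputable def iterBind (Kt : Kernel X X) (π : Measure X) : ℕ → Measure X
  | 0 => π
  | n + 1 => (iterBind Kt π n).bind fun x => Kt x

instance iterBind_isProb (Kt : Kernel X X) [IsMarkovKernel Kt] (π : Measure X)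
    [IsProbabilityMeasure π] (n : ℕ) : IsProbabilityMeasure (iterBind Kt π n) := by
  induction n with
  | zero => exact ‹IsProbabilityMeasure π›
  | succ n ih => exact aux_isProb_bind Kt (iterBind Kt π n)

end Aux

/-- sensitivity of invariant distributions: if the Markov kernels K (= Π)
and Kt (= Π̃) satisfy Doeblin minorizations with constants ε̲ ≤ ε w.r.t. the same ν,
and their one-step total-variation distance is at most ε - ε̲, then the invariant
distributions satisfy ‖π̃ - π‖_TV ≤ 1 - ε̲/ε. -/
theorem stmt_10 {X : Type*} [MeasurableSpace X]
    (K Kt : Kernel X X) [IsMarkovKernel K] [IsMarkovKernel Kt]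
    (ν : Measure X) [IsProbabilityMeasure ν]
    (εl ε : ℝ) (h0 : 0 < εl) (h1 : εl ≤ ε) (h2 : ε < 1)
    (hminK : ∀ x A, MeasurableSet A → ENNReal.ofReal εl * ν A ≤ K x A)
    (hminKt : ∀ x A, MeasurableSet A → ENNReal.ofReal ε * ν A ≤ Kt x A)
    (π πt : Measure X) [IsProbabilityMeasure π] [IsProbabilityMeasure πt]
    (hπ : π.bind (fun x => K x) = π) (hπt : πt.bind (fun x => Kt x) = πt)
    (hclose : ∀ x A, MeasurableSet A → |(Kt x A).toReal - (K x A).toReal| ≤ ε - εl) :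
    ∀ A, MeasurableSet A → |(πt A).toReal - (π A).toReal| ≤ 1 - εl / ε := by
  have hε0 : (0 : ℝ) < ε := lt_of_lt_of_le h0 h1
  set δ : ℝ := ε - εl with hδ
  have hδ0 : 0 ≤ δ := by simp [hδ]; linarith
  -- the sequence π Kt^n
  set μseq : ℕ → Measure X := iterBind Kt π with hμseq
  have hμ0 : μseq 0 = π := rfl
  have hμS : ∀ n, μseq (n + 1) = (μseq n).bind fun x => Kt x := fun n => rfl
  -- perturbation step: one-step difference of kernels under any prob measure
  have hpert : ∀ (m : Measure X) [IsProbabilityMeasure m], ∀ A, MeasurableSet A →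
      |((m.bind fun x => Kt x) A).toReal - ((m.bind fun x => K x) A).toReal| ≤ δ := by
    intro m _ A hA
    rw [aux_bind_toReal Kt m hA, aux_bind_toReal K m hA]
    have hgm : Measurable fun x => (Kt x A).toReal - (K x A).toReal :=
      (Measurable.ennreal_toReal (Kernel.measurable_coe Kt hA)).sub
        (Measurable.ennreal_toReal (Kernel.measurable_coe K hA))
    have hint : Integrable (fun x => (Kt x A).toReal - (K x A).toReal) m :=
      (integrable_const δ).mono' hgm.aestronglyMeasurable
        (Eventually.of_forall fun x => by
          rw [Real.norm_eq_abs]; exact hclose x A hA)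
    have hi1 : Integrable (fun x => (Kt x A).toReal) m :=
      (integrable_const (1 : ℝ)).mono'
        (Measurable.ennreal_toReal (Kernel.measurable_coe Kt hA)).aestronglyMeasurable
        (Eventually.of_forall fun x => by
          rw [Real.norm_eq_abs, abs_of_nonneg ENNReal.toReal_nonneg]
          exact aux_toReal_le_one _ _)
    have hi2 : Integrable (fun x => (K x A).toReal) m :=
      (integrable_const (1 : ℝ)).mono'
        (Measurable.ennreal_toReal (Kernel.measurable_coe K hA)).aestronglyMeasurable
        (Eventually.of_forall fun x => by
          rw [Real.norm_eq_abs, abs_of_nonneg ENNReal.toReal_nonneg]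
          exact aux_toReal_le_one _ _)
    rw [← integral_sub hi1 hi2, ← Real.norm_eq_abs]
    calc ‖∫ x, ((Kt x A).toReal - (K x A).toReal) ∂m‖
        ≤ δ * (m Set.univ).toReal :=
          norm_integral_le_of_norm_le_const
            (Eventually.of_forall fun x => by
              rw [Real.norm_eq_abs]; exact hclose x A hA)
      _ = δ := by simp
  -- Claim A: μseq n stays δ/ε-close to π
  have claimA : ∀ n, ∀ A, MeasurableSet A →
      |((μseq n) A).toReal - (π A).toReal| ≤ δ / ε := by
    intro n
    induction n with
    | zero =>
      intro A hA
      rw [hμ0]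
      simp [div_nonneg hδ0 hε0.le]
    | succ n ih =>
      intro A hA
      rw [hμS n]
      have step1 : |(((μseq n).bind fun x => Kt x) A).toReal
          - ((π.bind fun x => Kt x) A).toReal| ≤ (1 - ε) * (δ / ε) :=
        aux_contraction Kt ν hε0 h2.le hminKt (μseq n) π ih hA
      have step2 : |((π.bind fun x => Kt x) A).toReal
          - ((π.bind fun x => K x) A).toReal| ≤ δ := hpert π A hA
      have hπA : ((π.bind fun x => K x) A).toReal = (π A).toReal := by rw [hπ]
      have htri := abs_sub_le (((μseq n).bind fun x => Kt x) A).toReal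
        ((π.bind fun x => Kt x) A).toReal ((π.bind fun x => K x) A).toReal
      rw [hπA] at htri step2
      have : (1 - ε) * (δ / ε) + δ = δ / ε := by field_simp; ring
      linarith
  -- Claim B: μseq n converges to πt geometrically
  have claimB : ∀ n, ∀ A, MeasurableSet A →
      |((μseq n) A).toReal - (πt A).toReal| ≤ (1 - ε) ^ n := by
    intro n
    induction n with
    | zero =>
      intro A hA
      rw [hμ0, pow_zero]
      have ha : (π A).toReal ≤ 1 := aux_toReal_le_one π A
      have hb : (πt A).toReal ≤ 1 := aux_toReal_le_one πt A
      have ha0 : 0 ≤ (π A).toReal := ENNReal.toReal_nonneg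
      have hb0 : 0 ≤ (πt A).toReal := ENNReal.toReal_nonneg
      rw [abs_sub_le_iff]; constructor <;> linarith
    | succ n ih =>
      intro A hA
      rw [hμS n, ← hπt, pow_succ, mul_comm ((1-ε)^n)]
      exact aux_contraction Kt ν hε0 h2.le hminKt (μseq n) πt ih hA
  -- combine and take the limit
  intro A hA
  have hbound : ∀ n, |(πt A).toReal - (π A).toReal| ≤ (1 - ε) ^ n + δ / ε := by
    intro n
    have h1' := claimA n A hA
    have h2' := claimB n A hA
    have htri := abs_sub_le (πt A).toReal ((μseq n) A).toReal (π A).toReal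
    have h2'' : |(πt A).toReal - ((μseq n) A).toReal| ≤ (1 - ε) ^ n := by
      rw [abs_sub_comm]; exact h2'
    linarith
  have hlim : Tendsto (fun n : ℕ => (1 - ε) ^ n + δ / ε) atTop (nhds (0 + δ / ε)) :=
    (tendsto_pow_atTop_nhds_zero_of_lt_one (by linarith) (by linarith)).add
      tendsto_const_nhds
  have := ge_of_tendsto' hlim hbound
  rw [zero_add] at this
  have hfinal : δ / ε = 1 - εl / ε := by field_simp; exact hδ
  linarith [this]
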